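/- Let 𝓕 = {[0), [1)} and let B_ω^𝓕 be the corresponding monoid. For every k ∈ ω, the map γ_k defined by (i,j,[0))γ_k = (i,j,[1))γ_k = (ki, kj, [0)) for all i,j ∈ ω is a monoid endomorphism of B_ω^𝓕. -/

import Mathlib

/-- `[a) = {x ∈ ω : x ≥ a}`. -/
def seg (a : ℕ) : Set ℕ := {x | a ≤ x}

/-- `n + F` taken within `ω`: `{x ∈ ω : x = n + k for some k ∈ F}`. -/
def shift (n : ℤ) (F : Set ℕ) : Set ℕ := {x | ∃ k ∈ F, (x : ℤ) = n + k}

/-- The carrier `B_ω × 𝒫(ω)`. -/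
abbrev BF := ℕ × ℕ × Set ℕ

/-- The multiplication on `B_ω × 𝒫(ω)`. -/
def bfMul (x y : BF) : BF :=
  if x.2.1 ≤ y.1 then
    (x.1 + (y.1 - x.2.1), y.2.1, shift ((x.2.1 : ℤ) - y.1) x.2.2 ∩ y.2.2)
  else
    (x.1, (x.2.1 - y.1) + y.2.1, x.2.2 ∩ shift ((y.1 : ℤ) - x.2.1) y.2.2)

/-- The family `𝓕 = {[0), [1)}`. -/
def Fam : Set (Set ℕ) := {seg 0, seg 1}

/-- The carrier of the monoid `B_ω^𝓕` for `𝓕 = {[0),[1)}`. -/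
def Dom : Set BF := {x | x.2.2 ∈ Fam}

/-- The map `γ_k`. -/
def gam (k : ℕ) : BF → BF := fun x => (k * x.1, k * x.2.1, seg 0)

open Classical

/-- The map `δ_k`. -/
noncomputable def del (k : ℕ) : BF → BF := fun x =>
  if x.2.2 = seg 1 then (k * (x.1 + 1), k * (x.2.1 + 1), seg 0)
  else (k * x.1, k * x.2.1, seg 0)

/-- `e` is a monoid endomorphism of `B_ω^𝓕` for `𝓕 = {[0),[1)}`. -/
def IsMonEnd (e : BF → BF) : Prop :=
  (∀ x ∈ Dom, e x ∈ Dom) ∧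
  e (0, 0, seg 0) = (0, 0, seg 0) ∧
  ∀ x ∈ Dom, ∀ y ∈ Dom, e (bfMul x y) = bfMul (e x) (e y)

/-- For every `k ∈ ω`, the map `γ_k` is a monoid endomorphism of `B_ω^𝓕`. -/
lemma shift_seg0 (n : ℤ) (hn : n ≤ 0) : shift n (seg 0) = seg 0 := by
  ext x
  constructor
  · intro _; exact Nat.zero_le x
  · intro _
    refine ⟨x + (-n).toNat, Nat.zero_le _, ?_⟩
    have : ((-n).toNat : ℤ) = -n := Int.toNat_of_nonneg (by omega)
    push_cast
    omega

theorem stmt6 : ∀ k : ℕ, IsMonEnd (gam k) := by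
  intro k
  refine ⟨fun x _ => Or.inl rfl, by simp [gam], ?_⟩
  rintro ⟨i1, j1, F1⟩ _ ⟨i2, j2, F2⟩ _
  simp only [bfMul, gam]
  by_cases h : j1 ≤ i2
  · have h2 : k * j1 ≤ k * i2 := Nat.mul_le_mul_left k h
    rw [if_pos h]; simp only [h2, ↓reduceIte]
    have e1 : k * (i1 + (i2 - j1)) = k * i1 + (k * i2 - k * j1) := by
      rw [Nat.mul_add, Nat.mul_sub]
    simp only [gam, e1]
    congr 1; congr 1
    rw [shift_seg0 _ (by omega), Set.inter_self]
  · push_neg at h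
    rcases Nat.eq_zero_or_pos k with hk | hk
    · subst hk
      rw [if_neg (by omega)]; simp only [show 0 * j1 ≤ 0 * i2 by omega, ↓reduceIte]
      simp only [gam, Nat.zero_mul, Nat.sub_zero, Nat.add_zero, Nat.zero_add]
      congr 1; congr 1
      rw [shift_seg0 _ (by omega), Set.inter_self]
    · have h2 : ¬ (k * j1 ≤ k * i2) := fun hle => by
        have := Nat.le_of_mul_le_mul_left hle hk; omega
      rw [if_neg (by omega)]; simp only [h2, ↓reduceIte]
      have e1 : k * (j1 - i2 + j2) = k * j1 - k * i2 + k * j2 := by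
        rw [Nat.mul_add, Nat.mul_sub]
      simp only [gam, e1]
      congr 1; congr 1
      rw [shift_seg0 _ (by omega), Set.inter_self]
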